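/- Let p = p(n) ∈ [0,1] be a sequence of edge probabilities such that (n(1−p))⁴p² → ∞ as n → ∞. Then the probability that the Erdős–Rényi random graph G(n,1−p) is 4-chordal tends to 0 as n → ∞; that is, with high probability G(n,1−p) contains an induced (chordless) 4-cycle. -/

import Mathlib

open Filter

/-- Probability weight of a given graph `G` under the Erdős–Rényi model `G(n,p)`:
each of the `n.choose 2` possible edges is present independently with probability `p`. -/
noncomputable def graphWeight (n : ℕ) (p : ℝ) (G : SimpleGraph (Fin n)) : ℝ :=
  p ^ Nat.card G.edgeSet * (1 - p) ^ (n.choose 2 - Nat.card G.edgeSet)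

/-- Probability of the event `A` under the Erdős–Rényi random graph `G(n,p)`. -/
noncomputable def erProb (n : ℕ) (p : ℝ) (A : Set (SimpleGraph (Fin n))) : ℝ :=
  ∑ G : SimpleGraph (Fin n), A.indicator (graphWeight n p) G

/-- `v : ZMod k → V` describes a chordless (induced) `k`-cycle of `G`:
it is injective, consecutive vertices are adjacent, and non-consecutive
vertices are non-adjacent. -/
def IsChordlessCycleOn {V : Type} (G : SimpleGraph V) {k : ℕ} (v : ZMod k → V) : Prop :=
  Function.Injective v ∧
    (∀ i : ZMod k, G.Adj (v i) (v (i + 1))) ∧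
    ∀ i j : ZMod k, i ≠ j → j ≠ i + 1 → i ≠ j + 1 → ¬G.Adj (v i) (v j)

/-- A graph is 4-chordal if every cycle of length 4 has a chord, i.e. there is
no chordless 4-cycle. -/
def FourChordal {V : Type} (G : SimpleGraph V) : Prop :=
  ¬∃ v : ZMod 4 → V, IsChordlessCycleOn G v

/-- A graph is chordal if every cycle of length at least 4 has a chord, i.e. there is
no chordless cycle of length at least 4. -/
def Chordal {V : Type} (G : SimpleGraph V) : Prop :=
  ∀ k : ℕ, 4 ≤ k → ¬∃ v : ZMod k → V, IsChordlessCycleOn G v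

-- indicator of a proposition
open Classical in
noncomputable def pind (P : Prop) : ℝ := if P then 1 else 0

lemma pind_nonneg (P : Prop) : 0 ≤ pind P := by
  unfold pind; split <;> norm_num

lemma pind_le_one (P : Prop) : pind P ≤ 1 := by
  unfold pind; split <;> norm_num

lemma pind_true {P : Prop} (h : P) : pind P = 1 := by simp [pind, h]

lemma pind_false {P : Prop} (h : ¬P) : pind P = 0 := by simp [pind, h]

lemma pind_mul (P Q : Prop) : pind P * pind Q = pind (P ∧ Q) := by
  by_cases hP : P <;> by_cases hQ : Q <;>
    simp [pind_true, pind_false, hP, hQ]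

abbrev EdgeT (n : ℕ) := {e : Sym2 (Fin n) // ¬ e.IsDiag}

open Classical in
noncomputable def graphEquiv (n : ℕ) : SimpleGraph (Fin n) ≃ (EdgeT n → Bool) where
  toFun G e := decide (e.1 ∈ G.edgeSet)
  invFun f := SimpleGraph.fromEdgeSet {x | ∃ h : ¬ x.IsDiag, f ⟨x, h⟩ = true}
  left_inv G := by
    ext a b
    simp only [SimpleGraph.fromEdgeSet_adj, Set.mem_setOf_eq]
    constructor
    · rintro ⟨⟨h, hf⟩, hab⟩
      rw [decide_eq_true_iff] at hf
      exact hf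
    · intro hab
      have hne : a ≠ b := hab.ne
      refine ⟨⟨by simp [Sym2.isDiag_iff_proj_eq, hne], ?_⟩, hne⟩
      simp [SimpleGraph.mem_edgeSet, hab]
  right_inv f := by
    funext e
    obtain ⟨e, he⟩ := e
    induction e with
    | _ a b =>
      have hab : a ≠ b := by simpa [Sym2.isDiag_iff_proj_eq] using he
      have hmem : s(a, b) ∈ (SimpleGraph.fromEdgeSet
          {x : Sym2 (Fin n) | ∃ h : ¬ x.IsDiag, f ⟨x, h⟩ = true}).edgeSet
          ↔ f ⟨s(a, b), he⟩ = true := by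
        rw [SimpleGraph.mem_edgeSet, SimpleGraph.fromEdgeSet_adj]
        constructor
        · rintro ⟨⟨h', hf'⟩, _⟩; exact hf'
        · intro hf; exact ⟨⟨he, hf⟩, hab⟩
      cases hb : f ⟨s(a, b), he⟩
      · simp only [decide_eq_false_iff_not]
        rw [hmem, hb]; simp
      · simp only [decide_eq_true_iff]
        rw [hmem, hb]

lemma graphEquiv_eq_true_iff {n : ℕ} (G : SimpleGraph (Fin n)) (e : EdgeT n) :
    graphEquiv n G e = true ↔ e.1 ∈ G.edgeSet := by
  simp [graphEquiv]

lemma card_filter_eq (n : ℕ) (G : SimpleGraph (Fin n)) :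
    (Finset.univ.filter fun e : EdgeT n => graphEquiv n G e = true).card
      = Nat.card G.edgeSet := by
  classical
  have e1 : {e : EdgeT n // e.1 ∈ G.edgeSet} ≃ G.edgeSet :=
    { toFun := fun x => ⟨x.1.1, x.2⟩
      invFun := fun y => ⟨⟨y.1, G.not_isDiag_of_mem_edgeSet y.2⟩, y.2⟩
      left_inv := fun x => rfl
      right_inv := fun y => rfl }
  rw [show Nat.card G.edgeSet = Nat.card {e : EdgeT n // e.1 ∈ G.edgeSet} from
    (Nat.card_congr e1).symm]
  rw [Nat.card_eq_fintype_card, Fintype.card_subtype]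
  congr 1
  ext e
  simp [graphEquiv_eq_true_iff]

lemma card_EdgeT (n : ℕ) : Fintype.card (EdgeT n) = n.choose 2 := by
  rw [Sym2.card_subtype_not_diag, Fintype.card_fin]

lemma graphWeight_eq_prod (n : ℕ) (q : ℝ) (G : SimpleGraph (Fin n)) :
    graphWeight n q G = ∏ e : EdgeT n, (if graphEquiv n G e then q else 1 - q) := by
  classical
  rw [Finset.prod_ite, Finset.prod_const, Finset.prod_const]
  have h1 := card_filter_eq n G
  have h2 : (Finset.univ.filter fun e : EdgeT n => graphEquiv n G e = true).card +
      (Finset.univ.filter fun e : EdgeT n => ¬ (graphEquiv n G e = true)).card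
      = n.choose 2 := by
    rw [Finset.card_filter_add_card_filter_not, Finset.card_univ, card_EdgeT]
  unfold graphWeight
  rw [show (Finset.univ.filter fun e : EdgeT n => graphEquiv n G e).card
      = Nat.card G.edgeSet from h1]
  congr 1
  congr 1
  omega

lemma sum_event (n : ℕ) (q : ℝ) (S T : Finset (Sym2 (Fin n))) (hS : ∀ e ∈ S, ¬ e.IsDiag)
    (hT : ∀ e ∈ T, ¬ e.IsDiag) (hST : Disjoint S T) :
    ∑ G : SimpleGraph (Fin n),
      pind ((∀ e ∈ S, e ∈ G.edgeSet) ∧ (∀ e ∈ T, e ∉ G.edgeSet)) * graphWeight n q G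
      = q ^ S.card * (1 - q) ^ T.card := by
  classical
  set S' : Finset (EdgeT n) := S.subtype _ with hS'
  set T' : Finset (EdgeT n) := T.subtype _ with hT'
  have memS' : ∀ e : EdgeT n, e ∈ S' ↔ e.1 ∈ S := fun e => Finset.mem_subtype
  have memT' : ∀ e : EdgeT n, e ∈ T' ↔ e.1 ∈ T := fun e => Finset.mem_subtype
  have cardS' : S'.card = S.card := by
    rw [hS', Finset.card_subtype, Finset.filter_true_of_mem hS]
  have cardT' : T'.card = T.card := by
    rw [hT', Finset.card_subtype, Finset.filter_true_of_mem hT]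
  have hST' : Disjoint S' T' := by
    rw [Finset.disjoint_left]
    intro e heS heT
    exact (Finset.disjoint_left.mp hST) ((memS' e).mp heS) ((memT' e).mp heT)
  set W : EdgeT n → Bool → ℝ := fun e b =>
    if e ∈ S' then (if b then q else 0)
    else if e ∈ T' then (if b then 0 else 1 - q)
    else (if b then q else 1 - q) with hW
  have stepA : ∀ G : SimpleGraph (Fin n),
      pind ((∀ e ∈ S, e ∈ G.edgeSet) ∧ (∀ e ∈ T, e ∉ G.edgeSet)) * graphWeight n q G
        = ∏ e : EdgeT n, W e (graphEquiv n G e) := by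
    intro G
    rw [graphWeight_eq_prod n q G]
    by_cases hC : (∀ e ∈ S, e ∈ G.edgeSet) ∧ (∀ e ∈ T, e ∉ G.edgeSet)
    · rw [pind_true hC, one_mul]
      refine Finset.prod_congr rfl fun e _ => ?_
      by_cases heS : e ∈ S'
      · have hf : graphEquiv n G e = true :=
          (graphEquiv_eq_true_iff G e).mpr (hC.1 _ ((memS' e).mp heS))
        simp [hW, heS, hf]
      · by_cases heT : e ∈ T'
        · have hf : graphEquiv n G e = false := by
            rw [Bool.eq_false_iff, Ne, graphEquiv_eq_true_iff]
            exact hC.2 _ ((memT' e).mp heT)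
          simp [hW, heS, heT, hf]
        · simp [hW, heS, heT]
    · rw [pind_false hC, zero_mul]
      symm
      rcases not_and_or.mp hC with h1 | h1
      · push_neg at h1
        obtain ⟨e, heS, hnot⟩ := h1
        refine Finset.prod_eq_zero (Finset.mem_univ (⟨e, hS e heS⟩ : EdgeT n)) ?_
        have hf : graphEquiv n G ⟨e, hS e heS⟩ = false := by
          rw [Bool.eq_false_iff, Ne, graphEquiv_eq_true_iff]
          exact hnot
        have heS' : (⟨e, hS e heS⟩ : EdgeT n) ∈ S' := (memS' _).mpr heS
        simp [hW, heS', hf]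
      · push_neg at h1
        obtain ⟨e, heT, hmem⟩ := h1
        refine Finset.prod_eq_zero (Finset.mem_univ (⟨e, hT e heT⟩ : EdgeT n)) ?_
        have hf : graphEquiv n G ⟨e, hT e heT⟩ = true :=
          (graphEquiv_eq_true_iff G _).mpr hmem
        have heT' : (⟨e, hT e heT⟩ : EdgeT n) ∈ T' := (memT' _).mpr heT
        have heS' : (⟨e, hT e heT⟩ : EdgeT n) ∉ S' := by
          rw [memS']
          exact fun hh => (Finset.disjoint_left.mp hST) hh heT
        simp [hW, heS', heT', hf]
  calc ∑ G : SimpleGraph (Fin n),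
      pind ((∀ e ∈ S, e ∈ G.edgeSet) ∧ (∀ e ∈ T, e ∉ G.edgeSet)) * graphWeight n q G
      = ∑ G : SimpleGraph (Fin n), ∏ e : EdgeT n, W e (graphEquiv n G e) :=
        Finset.sum_congr rfl fun G _ => stepA G
    _ = ∑ f : EdgeT n → Bool, ∏ e : EdgeT n, W e (f e) :=
        Equiv.sum_comp (graphEquiv n) (fun f => ∏ e : EdgeT n, W e (f e))
    _ = ∏ e : EdgeT n, ∑ b : Bool, W e b := by
        rw [Finset.prod_univ_sum]
        rw [Fintype.piFinset_univ]
    _ = ∏ e : EdgeT n, (if e ∈ S' then q else if e ∈ T' then 1 - q else 1) := by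
        refine Finset.prod_congr rfl fun e _ => ?_
        rw [Fintype.sum_bool]
        by_cases heS : e ∈ S'
        · simp [hW, heS]
        · by_cases heT : e ∈ T' <;> simp [hW, heS, heT]
    _ = q ^ S.card * (1 - q) ^ T.card := by
        rw [← Finset.prod_mul_prod_compl (S' ∪ T')]
        have hcompl : ∏ e ∈ (S' ∪ T')ᶜ, (if e ∈ S' then q else if e ∈ T' then 1 - q else 1)
            = 1 := by
          refine Finset.prod_eq_one fun e he => ?_
          rw [Finset.mem_compl, Finset.mem_union] at he
          push_neg at he
          simp [he.1, he.2]
        rw [hcompl, mul_one, Finset.prod_union hST']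
        have h1 : ∏ e ∈ S', (if e ∈ S' then q else if e ∈ T' then 1 - q else 1)
            = q ^ S.card := by
          rw [Finset.prod_congr rfl (fun e he => if_pos he), Finset.prod_const, cardS']
        have h2 : ∏ e ∈ T', (if e ∈ S' then q else if e ∈ T' then 1 - q else 1)
            = (1 - q) ^ T.card := by
          rw [Finset.prod_congr rfl (fun e he => ?_), Finset.prod_const, cardT']
          rw [if_neg (fun hh => (Finset.disjoint_left.mp hST') hh he), if_pos he]
        rw [h1, h2]


section cyc

variable {n : ℕ} (v : ZMod 4 → Fin n)

def Sv : Finset (Sym2 (Fin n)) :=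
  Finset.image (fun i : ZMod 4 => s(v i, v (i + 1))) Finset.univ

def Tv : Finset (Sym2 (Fin n)) := {s(v 0, v 2), s(v 1, v 3)}

variable {v}

lemma vne (hv : Function.Injective v) : ∀ i j : ZMod 4, i ≠ j → v i ≠ v j :=
  fun _ _ hij h => hij (hv h)

lemma Sv_nondiag (hv : Function.Injective v) : ∀ e ∈ Sv v, ¬ e.IsDiag := by
  intro e he
  obtain ⟨i, _, rfl⟩ := Finset.mem_image.mp he
  rw [Sym2.isDiag_iff_proj_eq]
  have hz : ∀ k : ZMod 4, k ≠ k + 1 := by decide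
  exact vne hv i (i + 1) (hz i)

lemma Tv_nondiag (hv : Function.Injective v) : ∀ e ∈ Tv v, ¬ e.IsDiag := by
  intro e he
  rcases Finset.mem_insert.mp he with h | h
  · subst h; rw [Sym2.isDiag_iff_proj_eq]; exact vne hv 0 2 (by decide)
  · rw [Finset.mem_singleton] at h
    subst h; rw [Sym2.isDiag_iff_proj_eq]; exact vne hv 1 3 (by decide)

lemma gInj (hv : Function.Injective v) :
    Function.Injective (fun i : ZMod 4 => s(v i, v (i + 1))) := by
  intro i j hij
  simp only [Sym2.eq_iff] at hij
  rcases hij with ⟨h1, _⟩ | ⟨h1, h2⟩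
  · exact hv h1
  · have e1 := hv h1
    have e2 := hv h2
    subst e1
    have : ∀ k : ZMod 4, k + 1 + 1 ≠ k := by decide
    exact absurd e2 (this j)

lemma Sv_card (hv : Function.Injective v) : (Sv v).card = 4 := by
  rw [Sv, Finset.card_image_of_injective _ (gInj hv), Finset.card_univ]
  decide

lemma Tv_card (hv : Function.Injective v) : (Tv v).card = 2 := by
  rw [Tv, Finset.card_insert_of_notMem, Finset.card_singleton]
  rw [Finset.mem_singleton, Sym2.eq_iff]
  rintro (⟨h1, h2⟩ | ⟨h1, h2⟩)
  · exact vne hv 0 1 (by decide) h1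
  · exact vne hv 0 3 (by decide) h1

lemma Sv_Tv_disjoint (hv : Function.Injective v) : Disjoint (Sv v) (Tv v) := by
  rw [Finset.disjoint_left]
  intro e heS heT
  obtain ⟨i, _, rfl⟩ := Finset.mem_image.mp heS
  rcases Finset.mem_insert.mp heT with h | h
  · rw [Sym2.eq_iff] at h
    rcases h with ⟨h1, h2⟩ | ⟨h1, h2⟩
    · have e1 := hv h1; have e2 := hv h2; subst e1; exact absurd e2 (by decide)
    · have e1 := hv h1; have e2 := hv h2; subst e1; exact absurd e2 (by decide)
  · rw [Finset.mem_singleton, Sym2.eq_iff] at h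
    rcases h with ⟨h1, h2⟩ | ⟨h1, h2⟩
    · have e1 := hv h1; have e2 := hv h2; subst e1; exact absurd e2 (by decide)
    · have e1 := hv h1; have e2 := hv h2; subst e1; exact absurd e2 (by decide)

lemma event_iff (hv : Function.Injective v) (G : SimpleGraph (Fin n)) :
    IsChordlessCycleOn G v ↔
      (∀ e ∈ Sv v, e ∈ G.edgeSet) ∧ (∀ e ∈ Tv v, e ∉ G.edgeSet) := by
  constructor
  · rintro ⟨_, hadj, hnon⟩
    constructor
    · intro e he
      obtain ⟨i, _, rfl⟩ := Finset.mem_image.mp he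
      exact (G.mem_edgeSet).mpr (hadj i)
    · intro e he
      rcases Finset.mem_insert.mp he with h | h
      · subst h
        rw [G.mem_edgeSet]
        exact hnon 0 2 (by decide) (by decide) (by decide)
      · rw [Finset.mem_singleton] at h
        subst h
        rw [G.mem_edgeSet]
        exact hnon 1 3 (by decide) (by decide) (by decide)
  · rintro ⟨hE, hN⟩
    refine ⟨hv, fun i => ?_, fun i j h1 h2 h3 => ?_⟩
    · exact (G.mem_edgeSet).mp
        (hE _ (Finset.mem_image.mpr ⟨i, Finset.mem_univ i, rfl⟩))
    · have hz : ∀ i j : ZMod 4, i ≠ j → j ≠ i + 1 → i ≠ j + 1 → j = i + 2 := by decide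
      have hj : j = i + 2 := hz i j h1 h2 h3
      subst hj
      have hN0 : ¬ G.Adj (v 0) (v 2) := fun h =>
        hN _ (Finset.mem_insert_self _ _) ((G.mem_edgeSet).mpr h)
      have hN1 : ¬ G.Adj (v 1) (v 3) := fun h =>
        hN _ (Finset.mem_insert.mpr (Or.inr (Finset.mem_singleton_self _)))
          ((G.mem_edgeSet).mpr h)
      have h4 : i = 0 ∨ i = 1 ∨ i = 2 ∨ i = 3 := by revert i; decide
      rcases h4 with rfl | rfl | rfl | rfl
      · exact hN0
      · exact hN1
      · show ¬ G.Adj (v 2) (v (2 + 2))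
        have h22 : (2 + 2 : ZMod 4) = 0 := by decide
        rw [h22]
        exact fun h => hN0 h.symm
      · show ¬ G.Adj (v 3) (v (3 + 2))
        have h32 : (3 + 2 : ZMod 4) = 1 := by decide
        rw [h32]
        exact fun h => hN1 h.symm

lemma mem_Sv_endpoints {e : Sym2 (Fin n)} (he : e ∈ Sv v) {x : Fin n} (hx : x ∈ e) :
    x ∈ Finset.univ.image v := by
  obtain ⟨i, _, rfl⟩ := Finset.mem_image.mp he
  rcases Sym2.mem_iff.mp hx with h | h <;>
    exact Finset.mem_image.mpr ⟨_, Finset.mem_univ _, h.symm⟩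

lemma mem_Tv_endpoints {e : Sym2 (Fin n)} (he : e ∈ Tv v) {x : Fin n} (hx : x ∈ e) :
    x ∈ Finset.univ.image v := by
  rcases Finset.mem_insert.mp he with h | h
  · subst h
    rcases Sym2.mem_iff.mp hx with h | h <;>
      exact Finset.mem_image.mpr ⟨_, Finset.mem_univ _, h.symm⟩
  · rw [Finset.mem_singleton] at h
    subst h
    rcases Sym2.mem_iff.mp hx with h | h <;>
      exact Finset.mem_image.mpr ⟨_, Finset.mem_univ _, h.symm⟩

end cyc

section overlap

variable {n : ℕ}

/-- number of common vertices of the two 4-tuples -/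
def ov (v w : ZMod 4 → Fin n) : ℕ :=
  ((Finset.univ.image v) ∩ (Finset.univ.image w)).card

lemma card_univ_zmod4 : (Finset.univ : Finset (ZMod 4)).card = 4 := by decide

lemma imv_card_le (v : ZMod 4 → Fin n) : (Finset.univ.image v).card ≤ 4 := by
  exact Finset.card_image_le.trans (le_of_eq card_univ_zmod4)

lemma ov_ge_two {v w : ZMod 4 → Fin n} {a b : Fin n} (hab : a ≠ b)
    (hav : a ∈ Finset.univ.image v) (haw : a ∈ Finset.univ.image w)
    (hbv : b ∈ Finset.univ.image v) (hbw : b ∈ Finset.univ.image w) :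
    2 ≤ ov v w := by
  have hsub : ({a, b} : Finset (Fin n)) ⊆ (Finset.univ.image v) ∩ (Finset.univ.image w) := by
    intro x hx
    rcases Finset.mem_insert.mp hx with rfl | hx
    · exact Finset.mem_inter.mpr ⟨hav, haw⟩
    · rw [Finset.mem_singleton] at hx
      subst hx
      exact Finset.mem_inter.mpr ⟨hbv, hbw⟩
  have hcard : ({a, b} : Finset (Fin n)).card = 2 := by
    rw [Finset.card_insert_of_notMem (by simpa using hab), Finset.card_singleton]
  calc 2 = ({a, b} : Finset (Fin n)).card := hcard.symm
    _ ≤ _ := Finset.card_le_card hsub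
    
lemma ov_ge_four {v w : ZMod 4 → Fin n} (hv : Function.Injective v)
    (hall : ∀ i, v i ∈ Finset.univ.image w) : 4 ≤ ov v w := by
  have hsub : (Finset.univ.image v) ⊆ (Finset.univ.image v) ∩ (Finset.univ.image w) := by
    intro x hx
    obtain ⟨i, _, rfl⟩ := Finset.mem_image.mp hx
    exact Finset.mem_inter.mpr ⟨hx, hall i⟩
  have hcard : (Finset.univ.image v).card = 4 := by
    rw [Finset.card_image_of_injective _ hv, card_univ_zmod4]
  calc 4 = (Finset.univ.image v).card := hcard.symm
    _ ≤ _ := Finset.card_le_card hsub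

lemma cross_common {v w : ZMod 4 → Fin n} (hv : Function.Injective v)
    {e : Sym2 (Fin n)} (hev : e ∈ Sv v ∪ Tv v) (hew : e ∈ Sv w ∪ Tv w) :
    2 ≤ ov v w := by
  have hnd : ¬ e.IsDiag := by
    rcases Finset.mem_union.mp hev with h | h
    · exact Sv_nondiag hv e h
    · exact Tv_nondiag hv e h
  induction e with
  | _ a b =>
    have hab : a ≠ b := by simpa [Sym2.isDiag_iff_proj_eq] using hnd
    have hma : a ∈ s(a, b) := Sym2.mem_mk_left a b
    have hmb : b ∈ s(a, b) := Sym2.mem_mk_right a b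
    have hv' : ∀ x ∈ s(a,b), x ∈ Finset.univ.image v := by
      intro x hx
      rcases Finset.mem_union.mp hev with h | h
      · exact mem_Sv_endpoints h hx
      · exact mem_Tv_endpoints h hx
    have hw' : ∀ x ∈ s(a,b), x ∈ Finset.univ.image w := by
      intro x hx
      rcases Finset.mem_union.mp hew with h | h
      · exact mem_Sv_endpoints h hx
      · exact mem_Tv_endpoints h hx
    exact ov_ge_two hab (hv' a hma) (hw' a hma) (hv' b hmb) (hw' b hmb)

lemma S_inter_bound {v w : ZMod 4 → Fin n} (hv : Function.Injective v)
    (hm : ov v w ≤ 3) : ((Sv v) ∩ (Sv w)).card ≤ 2 := by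
  by_contra hcon
  push_neg at hcon
  set J : Finset (ZMod 4) :=
    Finset.univ.filter (fun i => s(v i, v (i + 1)) ∈ Sv w) with hJ
  have himg : (Sv v) ∩ (Sv w) = J.image (fun i : ZMod 4 => s(v i, v (i + 1))) := by
    ext e
    constructor
    · intro he
      obtain ⟨hev, hew⟩ := Finset.mem_inter.mp he
      obtain ⟨i, _, rfl⟩ := Finset.mem_image.mp hev
      exact Finset.mem_image.mpr ⟨i, Finset.mem_filter.mpr ⟨Finset.mem_univ i, hew⟩, rfl⟩
    · intro he
      obtain ⟨i, hi, rfl⟩ := Finset.mem_image.mp he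
      exact Finset.mem_inter.mpr
        ⟨Finset.mem_image.mpr ⟨i, Finset.mem_univ i, rfl⟩, (Finset.mem_filter.mp hi).2⟩
  have hJcard : 3 ≤ J.card := by
    rw [himg, Finset.card_image_of_injective _ (gInj hv)] at hcon
    omega
  have hcover : ∀ k : ZMod 4, ∃ i ∈ J, k = i ∨ k = i + 1 := by
    intro k
    by_cases hk : k ∈ J
    · exact ⟨k, hk, Or.inl rfl⟩
    · by_cases hk1 : k - 1 ∈ J
      · refine ⟨k - 1, hk1, Or.inr ?_⟩
        ring_nf
      · exfalso
        have hsub : ({k, k - 1} : Finset (ZMod 4)) ⊆ Jᶜ := by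
          intro x hx
          rcases Finset.mem_insert.mp hx with rfl | hx
          · simpa using hk
          · rw [Finset.mem_singleton] at hx
            subst hx
            simpa using hk1
        have hne : k ≠ k - 1 := by
          have : ∀ x : ZMod 4, x ≠ x - 1 := by decide
          exact this k
        have h2 : ({k, k - 1} : Finset (ZMod 4)).card = 2 := by
          rw [Finset.card_insert_of_notMem (by simpa using hne), Finset.card_singleton]
        have := Finset.card_le_card hsub
        rw [h2, Finset.card_compl] at this
        have h4' : Fintype.card (ZMod 4) = 4 := by decide
        omega
  have hall : ∀ k, v k ∈ Finset.univ.image w := by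
    intro k
    obtain ⟨i, hiJ, hk⟩ := hcover k
    have hSw : s(v i, v (i + 1)) ∈ Sv w := (Finset.mem_filter.mp hiJ).2
    rcases hk with rfl | rfl
    · exact mem_Sv_endpoints hSw (Sym2.mem_mk_left _ _)
    · exact mem_Sv_endpoints hSw (Sym2.mem_mk_right _ _)
  exact absurd (ov_ge_four hv hall) (by omega)

lemma T_inter_bound {v w : ZMod 4 → Fin n} (hv : Function.Injective v)
    (hm : ov v w ≤ 3) : ((Tv v) ∩ (Tv w)).card ≤ 1 := by
  by_contra hcon
  push_neg at hcon
  have hsub : Tv v ⊆ Tv w := by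
    have h1 : (Tv v ∩ Tv w) ⊆ Tv v := Finset.inter_subset_left
    have h2 : (Tv v).card ≤ (Tv v ∩ Tv w).card := by
      rw [Tv_card hv]; omega
    rw [← Finset.eq_of_subset_of_card_le h1 h2]
    exact Finset.inter_subset_right
  have hall : ∀ k, v k ∈ Finset.univ.image w := by
    have h02 : s(v 0, v 2) ∈ Tv w := hsub (Finset.mem_insert_self _ _)
    have h13 : s(v 1, v 3) ∈ Tv w :=
      hsub (Finset.mem_insert.mpr (Or.inr (Finset.mem_singleton_self _)))
    intro k
    have h4 : k = 0 ∨ k = 1 ∨ k = 2 ∨ k = 3 := by revert k; decide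
    rcases h4 with rfl | rfl | rfl | rfl
    · exact mem_Tv_endpoints h02 (Sym2.mem_mk_left _ _)
    · exact mem_Tv_endpoints h13 (Sym2.mem_mk_left _ _)
    · exact mem_Tv_endpoints h02 (Sym2.mem_mk_right _ _)
    · exact mem_Tv_endpoints h13 (Sym2.mem_mk_right _ _)
  exact absurd (ov_ge_four hv hall) (by omega)

end overlap


section counting

variable {n : ℕ}

lemma card_zmod4 : Fintype.card (ZMod 4) = 4 := rfl

lemma card_inj_eq :
    ((Finset.univ : Finset (ZMod 4 → Fin n)).filter Function.Injective).card
      = n.descFactorial 4 := by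
  classical
  rw [← Fintype.card_subtype]
  rw [Fintype.card_congr (Equiv.subtypeInjectiveEquivEmbedding (ZMod 4) (Fin n))]
  rw [Fintype.card_embedding_eq, Fintype.card_fin, card_zmod4]

lemma descFactorial_ge (hn : 3 ≤ n) : (n - 3) ^ 4 ≤ n.descFactorial 4 := by
  have h : n.descFactorial 4 = (n - 3) * ((n - 2) * ((n - 1) * ((n - 0) * 1))) := rfl
  rw [h]
  have h1 : n - 3 ≤ n - 2 := by omega
  have h2 : n - 3 ≤ n - 1 := by omega
  have h3 : n - 3 ≤ n - 0 := by omega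
  calc (n - 3) ^ 4 = (n - 3) * ((n - 3) * ((n - 3) * ((n - 3) * 1))) := by ring
    _ ≤ (n - 3) * ((n - 2) * ((n - 1) * ((n - 0) * 1))) := by
        exact Nat.mul_le_mul_left _ (Nat.mul_le_mul h1 (Nat.mul_le_mul h2
          (Nat.mul_le_mul h3 (le_refl 1))))

lemma card_fun_le :
    ((Finset.univ : Finset (ZMod 4 → Fin n)).filter Function.Injective).card ≤ n ^ 4 := by
  classical
  calc ((Finset.univ : Finset (ZMod 4 → Fin n)).filter Function.Injective).card
      ≤ (Finset.univ : Finset (ZMod 4 → Fin n)).card := Finset.card_filter_le _ _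
    _ = n ^ 4 := by
        rw [Finset.card_univ, Fintype.card_fun, Fintype.card_fin, card_zmod4]

lemma count_ov_ge_two (v : ZMod 4 → Fin n) :
    ((Finset.univ : Finset (ZMod 4 → Fin n)).filter (fun w => 2 ≤ ov v w)).card
      ≤ 192 * n ^ 2 := by
  classical
  set A : ZMod 4 × ZMod 4 → Finset (ZMod 4 → Fin n) := fun ij =>
    Fintype.piFinset (fun k => if k = ij.1 ∨ k = ij.2 then Finset.univ.image v
      else Finset.univ) with hA
  have hsub : ((Finset.univ : Finset (ZMod 4 → Fin n)).filter (fun w => 2 ≤ ov v w))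
      ⊆ (Finset.univ.offDiag).biUnion A := by
    intro w hw
    have h2 : 2 ≤ ov v w := (Finset.mem_filter.mp hw).2
    unfold ov at h2
    have hex : ∃ a ∈ (Finset.univ.image v) ∩ Finset.univ.image w,
        ∃ b ∈ (Finset.univ.image v) ∩ Finset.univ.image w, a ≠ b :=
      Finset.one_lt_card.mp (by omega)
    obtain ⟨a, ha, b, hb, hab⟩ := hex
    obtain ⟨i, _, hia⟩ := Finset.mem_image.mp (Finset.mem_inter.mp ha).2
    obtain ⟨j, _, hjb⟩ := Finset.mem_image.mp (Finset.mem_inter.mp hb).2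
    have hij : i ≠ j := by
      rintro rfl
      exact hab (hia ▸ hjb ▸ rfl)
    refine Finset.mem_biUnion.mpr ⟨(i, j), ?_, ?_⟩
    · exact Finset.mem_offDiag.mpr ⟨Finset.mem_univ _, Finset.mem_univ _, hij⟩
    · rw [hA, Fintype.mem_piFinset]
      intro k
      by_cases hk : k = i ∨ k = j
      · rw [if_pos hk]
        rcases hk with rfl | rfl
        · rw [hia]; exact (Finset.mem_inter.mp ha).1
        · rw [hjb]; exact (Finset.mem_inter.mp hb).1
      · rw [if_neg hk]; exact Finset.mem_univ _
  have hcardA : ∀ ij ∈ (Finset.univ : Finset (ZMod 4)).offDiag, (A ij).card ≤ 16 * n ^ 2 := by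
    rintro ⟨i, j⟩ hij
    have hijne : i ≠ j := (Finset.mem_offDiag.mp hij).2.2
    rw [hA, Fintype.card_piFinset]
    have hij2 : ({i, j} : Finset (ZMod 4)).card = 2 := by
      rw [Finset.card_insert_of_notMem (by simpa using hijne), Finset.card_singleton]
    have hcompl : (({i, j} : Finset (ZMod 4))ᶜ).card = 2 := by
      rw [Finset.card_compl, hij2, card_zmod4]
    have hsplit := Finset.prod_mul_prod_compl ({i, j} : Finset (ZMod 4))
      (fun k => (if k = i ∨ k = j then Finset.univ.image v
        else (Finset.univ : Finset (Fin n))).card)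
    rw [← hsplit]
    have hP : ∏ k ∈ ({i, j} : Finset (ZMod 4)),
        (if k = i ∨ k = j then Finset.univ.image v
          else (Finset.univ : Finset (Fin n))).card
        = (Finset.univ.image v).card ^ 2 := by
      have hpt : ∀ k ∈ ({i, j} : Finset (ZMod 4)),
          (if k = i ∨ k = j then Finset.univ.image v
            else (Finset.univ : Finset (Fin n))).card = (Finset.univ.image v).card := by
        intro k hk
        rw [if_pos]
        rcases Finset.mem_insert.mp hk with rfl | hk
        · exact Or.inl rfl
        · exact Or.inr (Finset.mem_singleton.mp hk)
      rw [Finset.prod_congr rfl hpt, Finset.prod_const, hij2]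
    have hPc : ∏ k ∈ ({i, j} : Finset (ZMod 4))ᶜ,
        (if k = i ∨ k = j then Finset.univ.image v
          else (Finset.univ : Finset (Fin n))).card
        = n ^ 2 := by
      have hpt : ∀ k ∈ ({i, j} : Finset (ZMod 4))ᶜ,
          (if k = i ∨ k = j then Finset.univ.image v
            else (Finset.univ : Finset (Fin n))).card = n := by
        intro k hk
        rw [Finset.mem_compl] at hk
        rw [if_neg, Finset.card_univ, Fintype.card_fin]
        intro hcon
        apply hk
        rcases hcon with rfl | rfl
        · exact Finset.mem_insert_self _ _
        · exact Finset.mem_insert.mpr (Or.inr (Finset.mem_singleton_self _))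
      rw [Finset.prod_congr rfl hpt, Finset.prod_const, hcompl]
    rw [hP, hPc]
    have h16 : (Finset.univ.image v).card ^ 2 ≤ 16 :=
      le_trans (Nat.pow_le_pow_left (imv_card_le v) 2) (by norm_num)
    exact Nat.mul_le_mul_right _ h16
  calc ((Finset.univ : Finset (ZMod 4 → Fin n)).filter (fun w => 2 ≤ ov v w)).card
      ≤ ((Finset.univ.offDiag).biUnion A).card := Finset.card_le_card hsub
    _ ≤ ∑ ij ∈ Finset.univ.offDiag, (A ij).card := Finset.card_biUnion_le
    _ ≤ (Finset.univ.offDiag).card * (16 * n ^ 2) :=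
        Finset.sum_le_card_nsmul _ _ _ hcardA
    _ ≤ 192 * n ^ 2 := by
        have hoff : ((Finset.univ : Finset (ZMod 4)).offDiag).card = 12 := by decide
        rw [hoff]
        omega

lemma count_ov_ge_four (v : ZMod 4 → Fin n) :
    ((Finset.univ : Finset (ZMod 4 → Fin n)).filter (fun w => 4 ≤ ov v w)).card
      ≤ 256 := by
  classical
  have hsub : ((Finset.univ : Finset (ZMod 4 → Fin n)).filter (fun w => 4 ≤ ov v w))
      ⊆ Fintype.piFinset (fun _ : ZMod 4 => Finset.univ.image v) := by
    intro w hw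
    have h4 : 4 ≤ ov v w := (Finset.mem_filter.mp hw).2
    unfold ov at h4
    have h1 : ((Finset.univ.image v) ∩ Finset.univ.image w) ⊆ Finset.univ.image w :=
      Finset.inter_subset_right
    have h2 : (Finset.univ.image w).card ≤ ((Finset.univ.image v) ∩ Finset.univ.image w).card := by
      have := imv_card_le w
      omega
    have heq : (Finset.univ.image v) ∩ Finset.univ.image w = Finset.univ.image w :=
      Finset.eq_of_subset_of_card_le h1 h2
    rw [Fintype.mem_piFinset]
    intro k
    have hk : w k ∈ Finset.univ.image w := Finset.mem_image.mpr ⟨k, Finset.mem_univ _, rfl⟩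
    rw [← heq] at hk
    exact (Finset.mem_inter.mp hk).1
  calc ((Finset.univ : Finset (ZMod 4 → Fin n)).filter (fun w => 4 ≤ ov v w)).card
      ≤ (Fintype.piFinset (fun _ : ZMod 4 => Finset.univ.image v)).card :=
        Finset.card_le_card hsub
    _ = ∏ _k : ZMod 4, (Finset.univ.image v).card := by rw [Fintype.card_piFinset]
    _ = (Finset.univ.image v).card ^ 4 := by
        rw [Finset.prod_const, Finset.card_univ, card_zmod4]
    _ ≤ 256 := le_trans (Nat.pow_le_pow_left (imv_card_le v) 4) (by norm_num)

end counting

lemma pind_congr {P Q : Prop} (h : P ↔ Q) : pind P = pind Q := by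
  by_cases hP : P
  · rw [pind_true hP, pind_true (h.mp hP)]
  · rw [pind_false hP, pind_false (fun hQ => hP (h.mpr hQ))]

section prob

variable {n : ℕ} {q : ℝ}

lemma total_mass (n : ℕ) (q : ℝ) : ∑ G : SimpleGraph (Fin n), graphWeight n q G = 1 := by
  have h := sum_event n q ∅ ∅ (by simp) (by simp) (by simp)
  rw [Finset.card_empty, pow_zero, pow_zero, one_mul] at h
  rw [← h]
  refine Finset.sum_congr rfl fun G _ => ?_
  rw [pind_true, one_mul]
  exact ⟨fun e he => absurd he (Finset.notMem_empty e),
    fun e he => absurd he (Finset.notMem_empty e)⟩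

lemma single_prob {v : ZMod 4 → Fin n} (hv : Function.Injective v) :
    ∑ G : SimpleGraph (Fin n), pind (IsChordlessCycleOn G v) * graphWeight n q G
      = q ^ 4 * (1 - q) ^ 2 := by
  have h : ∀ G : SimpleGraph (Fin n),
      pind (IsChordlessCycleOn G v)
        = pind ((∀ e ∈ Sv v, e ∈ G.edgeSet) ∧ (∀ e ∈ Tv v, e ∉ G.edgeSet)) :=
    fun G => pind_congr (event_iff hv G)
  calc ∑ G : SimpleGraph (Fin n), pind (IsChordlessCycleOn G v) * graphWeight n q G
      = ∑ G : SimpleGraph (Fin n),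
          pind ((∀ e ∈ Sv v, e ∈ G.edgeSet) ∧ (∀ e ∈ Tv v, e ∉ G.edgeSet))
            * graphWeight n q G := by
        exact Finset.sum_congr rfl fun G _ => by rw [h G]
    _ = q ^ (Sv v).card * (1 - q) ^ (Tv v).card :=
        sum_event n q _ _ (Sv_nondiag hv) (Tv_nondiag hv) (Sv_Tv_disjoint hv)
    _ = q ^ 4 * (1 - q) ^ 2 := by rw [Sv_card hv, Tv_card hv]

lemma joint_iff {v w : ZMod 4 → Fin n} (hv : Function.Injective v)
    (hw : Function.Injective w) (G : SimpleGraph (Fin n)) :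
    (IsChordlessCycleOn G v ∧ IsChordlessCycleOn G w) ↔
      ((∀ e ∈ Sv v ∪ Sv w, e ∈ G.edgeSet) ∧ (∀ e ∈ Tv v ∪ Tv w, e ∉ G.edgeSet)) := by
  rw [event_iff hv G, event_iff hw G, Finset.forall_mem_union, Finset.forall_mem_union]
  tauto

lemma union_S_nondiag {v w : ZMod 4 → Fin n} (hv : Function.Injective v)
    (hw : Function.Injective w) : ∀ e ∈ Sv v ∪ Sv w, ¬ e.IsDiag := by
  intro e he
  rcases Finset.mem_union.mp he with h | h
  · exact Sv_nondiag hv e h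
  · exact Sv_nondiag hw e h

lemma union_T_nondiag {v w : ZMod 4 → Fin n} (hv : Function.Injective v)
    (hw : Function.Injective w) : ∀ e ∈ Tv v ∪ Tv w, ¬ e.IsDiag := by
  intro e he
  rcases Finset.mem_union.mp he with h | h
  · exact Tv_nondiag hv e h
  · exact Tv_nondiag hw e h

lemma pair_far_prob {v w : ZMod 4 → Fin n} (hv : Function.Injective v)
    (hw : Function.Injective w) (hov : ov v w ≤ 1) :
    ∑ G : SimpleGraph (Fin n),
      pind (IsChordlessCycleOn G v ∧ IsChordlessCycleOn G w) * graphWeight n q G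
      = q ^ 8 * (1 - q) ^ 4 := by
  have hno : ∀ e : Sym2 (Fin n), e ∈ Sv v ∪ Tv v → e ∈ Sv w ∪ Tv w → False := by
    intro e h1 h2
    have := cross_common hv h1 h2
    omega
  have dSS : Disjoint (Sv v) (Sv w) := by
    rw [Finset.disjoint_left]
    intro e h1 h2
    exact hno e (Finset.mem_union_left _ h1) (Finset.mem_union_left _ h2)
  have dTT : Disjoint (Tv v) (Tv w) := by
    rw [Finset.disjoint_left]
    intro e h1 h2
    exact hno e (Finset.mem_union_right _ h1) (Finset.mem_union_right _ h2)
  have dST : Disjoint (Sv v ∪ Sv w) (Tv v ∪ Tv w) := by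
    rw [Finset.disjoint_left]
    intro e h1 h2
    rcases Finset.mem_union.mp h1 with hs | hs <;> rcases Finset.mem_union.mp h2 with ht | ht
    · exact (Finset.disjoint_left.mp (Sv_Tv_disjoint hv)) hs ht
    · exact hno e (Finset.mem_union_left _ hs) (Finset.mem_union_right _ ht)
    · exact hno e (Finset.mem_union_right _ ht) (Finset.mem_union_left _ hs)
    · exact (Finset.disjoint_left.mp (Sv_Tv_disjoint hw)) hs ht
  calc ∑ G : SimpleGraph (Fin n),
      pind (IsChordlessCycleOn G v ∧ IsChordlessCycleOn G w) * graphWeight n q G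
      = ∑ G : SimpleGraph (Fin n),
          pind ((∀ e ∈ Sv v ∪ Sv w, e ∈ G.edgeSet) ∧ (∀ e ∈ Tv v ∪ Tv w, e ∉ G.edgeSet))
            * graphWeight n q G :=
        Finset.sum_congr rfl fun G _ => by rw [pind_congr (joint_iff hv hw G)]
    _ = q ^ (Sv v ∪ Sv w).card * (1 - q) ^ (Tv v ∪ Tv w).card :=
        sum_event n q _ _ (union_S_nondiag hv hw) (union_T_nondiag hv hw) dST
    _ = q ^ 8 * (1 - q) ^ 4 := by
        rw [Finset.card_union_of_disjoint dSS, Finset.card_union_of_disjoint dTT,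
          Sv_card hv, Sv_card hw, Tv_card hv, Tv_card hw]

lemma pair_bound (hq0 : 0 ≤ q) (hq1 : q ≤ 1) {v w : ZMod 4 → Fin n}
    (hv : Function.Injective v) (hw : Function.Injective w) {a b : ℕ}
    (ha : a ≤ (Sv v ∪ Sv w).card) (hb : b ≤ (Tv v ∪ Tv w).card) :
    ∑ G : SimpleGraph (Fin n),
      pind (IsChordlessCycleOn G v ∧ IsChordlessCycleOn G w) * graphWeight n q G
      ≤ q ^ a * (1 - q) ^ b := by
  have hq0' : 0 ≤ 1 - q := by linarith
  have hq1' : 1 - q ≤ 1 := by linarith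
  by_cases hd : Disjoint (Sv v ∪ Sv w) (Tv v ∪ Tv w)
  · calc ∑ G : SimpleGraph (Fin n),
        pind (IsChordlessCycleOn G v ∧ IsChordlessCycleOn G w) * graphWeight n q G
        = ∑ G : SimpleGraph (Fin n),
            pind ((∀ e ∈ Sv v ∪ Sv w, e ∈ G.edgeSet) ∧ (∀ e ∈ Tv v ∪ Tv w, e ∉ G.edgeSet))
              * graphWeight n q G :=
          Finset.sum_congr rfl fun G _ => by rw [pind_congr (joint_iff hv hw G)]
      _ = q ^ (Sv v ∪ Sv w).card * (1 - q) ^ (Tv v ∪ Tv w).card :=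
          sum_event n q _ _ (union_S_nondiag hv hw) (union_T_nondiag hv hw) hd
      _ ≤ q ^ a * (1 - q) ^ b := by
          apply mul_le_mul
          · exact pow_le_pow_of_le_one hq0 hq1 ha
          · exact pow_le_pow_of_le_one hq0' hq1' hb
          · positivity
          · positivity
  · rw [Finset.not_disjoint_iff] at hd
    obtain ⟨e, heS, heT⟩ := hd
    have hzero : ∀ G : SimpleGraph (Fin n),
        pind (IsChordlessCycleOn G v ∧ IsChordlessCycleOn G w) * graphWeight n q G = 0 := by
      intro G
      rw [pind_false, zero_mul]
      intro hcon
      rw [joint_iff hv hw G] at hcon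
      exact hcon.2 e heT (hcon.1 e heS)
    rw [Finset.sum_congr rfl fun G _ => hzero G, Finset.sum_const, smul_zero]
    positivity

end prob

lemma pind_eq_zero_iff {P : Prop} : pind P = 0 ↔ ¬P := by
  by_cases hP : P
  · rw [pind_true hP]; simp [hP]
  · rw [pind_false hP]; simp [hP]

lemma pind_not (P : Prop) : pind (¬P) = 1 - pind P := by
  by_cases hP : P
  · rw [pind_true hP, pind_false (not_not_intro hP)]; ring
  · rw [pind_false hP, pind_true hP]; ring

section moments

variable {n : ℕ} {q : ℝ}

def V4 (n : ℕ) : Finset (ZMod 4 → Fin n) := Finset.univ.filter Function.Injective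

lemma mem_V4 {v : ZMod 4 → Fin n} : v ∈ V4 n ↔ Function.Injective v := by
  simp [V4]

noncomputable def Xc (n : ℕ) (G : SimpleGraph (Fin n)) : ℝ :=
  ∑ v ∈ V4 n, pind (IsChordlessCycleOn G v)

lemma Xc_nonneg (G : SimpleGraph (Fin n)) : 0 ≤ Xc n G :=
  Finset.sum_nonneg fun v _ => pind_nonneg _

lemma fourChordal_iff_X (G : SimpleGraph (Fin n)) : FourChordal G ↔ Xc n G = 0 := by
  constructor
  · intro hF
    refine Finset.sum_eq_zero fun v _ => ?_
    exact pind_eq_zero_iff.mpr fun hA => hF ⟨v, hA⟩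
  · intro hX
    rintro ⟨v, hA⟩
    have hv : v ∈ V4 n := mem_V4.mpr hA.1
    have := (Finset.sum_eq_zero_iff_of_nonneg (fun v _ => pind_nonneg _)).mp hX v hv
    exact pind_eq_zero_iff.mp this hA

lemma weight_nonneg (hq0 : 0 ≤ q) (hq1 : q ≤ 1) (G : SimpleGraph (Fin n)) :
    0 ≤ graphWeight n q G :=
  mul_nonneg (pow_nonneg hq0 _) (pow_nonneg (by linarith) _)

lemma first_moment :
    ∑ G : SimpleGraph (Fin n), graphWeight n q G * Xc n G
      = ((V4 n).card : ℝ) * (q ^ 4 * (1 - q) ^ 2) := by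
  calc ∑ G : SimpleGraph (Fin n), graphWeight n q G * Xc n G
      = ∑ G : SimpleGraph (Fin n), ∑ v ∈ V4 n,
          pind (IsChordlessCycleOn G v) * graphWeight n q G := by
        refine Finset.sum_congr rfl fun G _ => ?_
        rw [Xc, Finset.mul_sum]
        exact Finset.sum_congr rfl fun v _ => mul_comm _ _
    _ = ∑ v ∈ V4 n, ∑ G : SimpleGraph (Fin n),
          pind (IsChordlessCycleOn G v) * graphWeight n q G := Finset.sum_comm
    _ = ∑ v ∈ V4 n, q ^ 4 * (1 - q) ^ 2 :=
        Finset.sum_congr rfl fun v hv => single_prob (mem_V4.mp hv)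
    _ = ((V4 n).card : ℝ) * (q ^ 4 * (1 - q) ^ 2) := by
        rw [Finset.sum_const, nsmul_eq_mul]

lemma per_v_bound (hq0 : 0 ≤ q) (hq1 : q ≤ 1) {v : ZMod 4 → Fin n}
    (hv : Function.Injective v) :
    ∑ u ∈ V4 n, ((∑ G : SimpleGraph (Fin n),
        pind (IsChordlessCycleOn G v ∧ IsChordlessCycleOn G u) * graphWeight n q G)
          - q ^ 8 * (1 - q) ^ 4)
      ≤ 192 * (n : ℝ) ^ 2 * (q ^ 6 * (1 - q) ^ 3) + 256 * (q ^ 4 * (1 - q) ^ 2) := by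
  classical
  have hq0' : (0:ℝ) ≤ 1 - q := by linarith
  set J : (ZMod 4 → Fin n) → ℝ := fun u => (∑ G : SimpleGraph (Fin n),
    pind (IsChordlessCycleOn G v ∧ IsChordlessCycleOn G u) * graphWeight n q G)
      - q ^ 8 * (1 - q) ^ 4 with hJ
  rw [← Finset.sum_filter_add_sum_filter_not (V4 n) (fun u => ov v u ≤ 1) J]
  have hA : ∑ u ∈ (V4 n).filter (fun u => ov v u ≤ 1), J u = 0 := by
    refine Finset.sum_eq_zero fun u hu => ?_
    obtain ⟨huV, hov⟩ := Finset.mem_filter.mp hu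
    simp only [hJ]
    rw [pair_far_prob hv (mem_V4.mp huV) hov]
    ring
  rw [hA, zero_add]
  rw [← Finset.sum_filter_add_sum_filter_not ((V4 n).filter (fun u => ¬ ov v u ≤ 1))
    (fun u => ov v u ≤ 3) J]
  have hB : ∑ u ∈ ((V4 n).filter (fun u => ¬ ov v u ≤ 1)).filter (fun u => ov v u ≤ 3), J u
      ≤ 192 * (n : ℝ) ^ 2 * (q ^ 6 * (1 - q) ^ 3) := by
    have hbd : ∀ u ∈ ((V4 n).filter (fun u => ¬ ov v u ≤ 1)).filter (fun u => ov v u ≤ 3),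
        J u ≤ q ^ 6 * (1 - q) ^ 3 := by
      intro u hu
      obtain ⟨hu', hov3⟩ := Finset.mem_filter.mp hu
      obtain ⟨huV, _⟩ := Finset.mem_filter.mp hu'
      have hu_inj := mem_V4.mp huV
      have hScard : 6 ≤ (Sv v ∪ Sv u).card := by
        have h1 := Finset.card_union_add_card_inter (Sv v) (Sv u)
        have h2 := S_inter_bound hv hov3
        rw [Sv_card hv, Sv_card hu_inj] at h1
        omega
      have hTcard : 3 ≤ (Tv v ∪ Tv u).card := by
        have h1 := Finset.card_union_add_card_inter (Tv v) (Tv u)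
        have h2 := T_inter_bound hv hov3
        rw [Tv_card hv, Tv_card hu_inj] at h1
        omega
      have := pair_bound hq0 hq1 hv hu_inj hScard hTcard
      simp only [hJ]
      have hc : (0:ℝ) ≤ q ^ 8 * (1 - q) ^ 4 := by positivity
      linarith
    calc ∑ u ∈ ((V4 n).filter (fun u => ¬ ov v u ≤ 1)).filter (fun u => ov v u ≤ 3), J u
        ≤ (((V4 n).filter (fun u => ¬ ov v u ≤ 1)).filter (fun u => ov v u ≤ 3)).card
            • (q ^ 6 * (1 - q) ^ 3) := Finset.sum_le_card_nsmul _ _ _ hbd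
      _ ≤ 192 * (n : ℝ) ^ 2 * (q ^ 6 * (1 - q) ^ 3) := by
          rw [nsmul_eq_mul]
          have hcard : (((V4 n).filter (fun u => ¬ ov v u ≤ 1)).filter
              (fun u => ov v u ≤ 3)).card ≤ 192 * n ^ 2 := by
            refine le_trans (Finset.card_le_card ?_) (count_ov_ge_two v)
            intro u hu
            obtain ⟨hu', _⟩ := Finset.mem_filter.mp hu
            obtain ⟨_, hov⟩ := Finset.mem_filter.mp hu'
            exact Finset.mem_filter.mpr ⟨Finset.mem_univ _, by omega⟩
          have : ((((V4 n).filter (fun u => ¬ ov v u ≤ 1)).filter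
              (fun u => ov v u ≤ 3)).card : ℝ) ≤ 192 * (n:ℝ) ^ 2 := by
            calc ((((V4 n).filter (fun u => ¬ ov v u ≤ 1)).filter
                (fun u => ov v u ≤ 3)).card : ℝ) ≤ ((192 * n ^ 2 : ℕ) : ℝ) := by
                  exact_mod_cast hcard
              _ = 192 * (n:ℝ) ^ 2 := by push_cast; ring
          exact mul_le_mul_of_nonneg_right this (by positivity)
  have hC : ∑ u ∈ ((V4 n).filter (fun u => ¬ ov v u ≤ 1)).filter (fun u => ¬ ov v u ≤ 3), J u
      ≤ 256 * (q ^ 4 * (1 - q) ^ 2) := by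
    have hbd : ∀ u ∈ ((V4 n).filter (fun u => ¬ ov v u ≤ 1)).filter (fun u => ¬ ov v u ≤ 3),
        J u ≤ q ^ 4 * (1 - q) ^ 2 := by
      intro u hu
      obtain ⟨hu', _⟩ := Finset.mem_filter.mp hu
      obtain ⟨huV, _⟩ := Finset.mem_filter.mp hu'
      have hu_inj := mem_V4.mp huV
      have hScard : 4 ≤ (Sv v ∪ Sv u).card := by
        have := Finset.card_le_card (Finset.subset_union_left (s₁ := Sv v) (s₂ := Sv u))
        rw [Sv_card hv] at this
        omega
      have hTcard : 2 ≤ (Tv v ∪ Tv u).card := by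
        have := Finset.card_le_card (Finset.subset_union_left (s₁ := Tv v) (s₂ := Tv u))
        rw [Tv_card hv] at this
        omega
      have := pair_bound hq0 hq1 hv hu_inj hScard hTcard
      simp only [hJ]
      have hc : (0:ℝ) ≤ q ^ 8 * (1 - q) ^ 4 := by positivity
      linarith
    calc ∑ u ∈ ((V4 n).filter (fun u => ¬ ov v u ≤ 1)).filter (fun u => ¬ ov v u ≤ 3), J u
        ≤ (((V4 n).filter (fun u => ¬ ov v u ≤ 1)).filter (fun u => ¬ ov v u ≤ 3)).card
            • (q ^ 4 * (1 - q) ^ 2) := Finset.sum_le_card_nsmul _ _ _ hbd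
      _ ≤ 256 * (q ^ 4 * (1 - q) ^ 2) := by
          rw [nsmul_eq_mul]
          have hcard : (((V4 n).filter (fun u => ¬ ov v u ≤ 1)).filter
              (fun u => ¬ ov v u ≤ 3)).card ≤ 256 := by
            refine le_trans (Finset.card_le_card ?_) (count_ov_ge_four v)
            intro u hu
            obtain ⟨hu', hov⟩ := Finset.mem_filter.mp hu
            exact Finset.mem_filter.mpr ⟨Finset.mem_univ _, by omega⟩
          have : ((((V4 n).filter (fun u => ¬ ov v u ≤ 1)).filter
              (fun u => ¬ ov v u ≤ 3)).card : ℝ) ≤ 256 := by exact_mod_cast hcard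
          exact mul_le_mul_of_nonneg_right this (by positivity)
  linarith

lemma second_moment_bound (hq0 : 0 ≤ q) (hq1 : q ≤ 1) :
    ∑ G : SimpleGraph (Fin n), graphWeight n q G * (Xc n G) ^ 2
      - (((V4 n).card : ℝ) * (q ^ 4 * (1 - q) ^ 2)) ^ 2
      ≤ ((V4 n).card : ℝ)
        * (192 * (n : ℝ) ^ 2 * (q ^ 6 * (1 - q) ^ 3) + 256 * (q ^ 4 * (1 - q) ^ 2)) := by
  classical
  have hexp : ∑ G : SimpleGraph (Fin n), graphWeight n q G * (Xc n G) ^ 2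
      = ∑ v ∈ V4 n, ∑ u ∈ V4 n, ∑ G : SimpleGraph (Fin n),
          pind (IsChordlessCycleOn G v ∧ IsChordlessCycleOn G u) * graphWeight n q G := by
    have hG : ∀ G : SimpleGraph (Fin n), graphWeight n q G * (Xc n G) ^ 2
        = ∑ v ∈ V4 n, ∑ u ∈ V4 n,
            pind (IsChordlessCycleOn G v ∧ IsChordlessCycleOn G u) * graphWeight n q G := by
      intro G
      rw [Xc, sq, Finset.sum_mul_sum]
      rw [Finset.mul_sum]
      refine Finset.sum_congr rfl fun a _ => ?_
      rw [Finset.mul_sum]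
      refine Finset.sum_congr rfl fun b _ => ?_
      rw [pind_mul]
      ring
    rw [Finset.sum_congr rfl fun G _ => hG G]
    rw [Finset.sum_comm]
    refine Finset.sum_congr rfl fun a _ => Finset.sum_comm
  have hsq : (((V4 n).card : ℝ) * (q ^ 4 * (1 - q) ^ 2)) ^ 2
      = ∑ v ∈ V4 n, ∑ _u ∈ V4 n, q ^ 8 * (1 - q) ^ 4 := by
    rw [Finset.sum_const, Finset.sum_const, nsmul_eq_mul, nsmul_eq_mul]
    ring
  rw [hexp, hsq, ← Finset.sum_sub_distrib]
  have hstep : ∀ v ∈ V4 n,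
      (∑ u ∈ V4 n, ∑ G : SimpleGraph (Fin n),
          pind (IsChordlessCycleOn G v ∧ IsChordlessCycleOn G u) * graphWeight n q G)
        - (∑ _u ∈ V4 n, q ^ 8 * (1 - q) ^ 4)
      ≤ 192 * (n : ℝ) ^ 2 * (q ^ 6 * (1 - q) ^ 3) + 256 * (q ^ 4 * (1 - q) ^ 2) := by
    intro v hvV
    rw [← Finset.sum_sub_distrib]
    exact per_v_bound hq0 hq1 (mem_V4.mp hvV)
  calc ∑ v ∈ V4 n, ((∑ u ∈ V4 n, ∑ G : SimpleGraph (Fin n),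
          pind (IsChordlessCycleOn G v ∧ IsChordlessCycleOn G u) * graphWeight n q G)
        - ∑ _u ∈ V4 n, q ^ 8 * (1 - q) ^ 4)
      ≤ ∑ _v ∈ V4 n, (192 * (n : ℝ) ^ 2 * (q ^ 6 * (1 - q) ^ 3)
          + 256 * (q ^ 4 * (1 - q) ^ 2)) := Finset.sum_le_sum hstep
    _ = ((V4 n).card : ℝ)
        * (192 * (n : ℝ) ^ 2 * (q ^ 6 * (1 - q) ^ 3) + 256 * (q ^ 4 * (1 - q) ^ 2)) := by
        rw [Finset.sum_const, nsmul_eq_mul]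

end moments

lemma pind_sq (P : Prop) : pind P ^ 2 = pind P := by
  by_cases hP : P
  · rw [pind_true hP]; norm_num
  · rw [pind_false hP]; norm_num

section csstep

variable {n : ℕ} {q : ℝ}

lemma cs_step (hq0 : 0 ≤ q) (hq1 : q ≤ 1) :
    (∑ G : SimpleGraph (Fin n), pind (Xc n G = 0) * graphWeight n q G)
        * (∑ G : SimpleGraph (Fin n), graphWeight n q G * Xc n G) ^ 2
      ≤ ∑ G : SimpleGraph (Fin n), graphWeight n q G * (Xc n G) ^ 2
        - (∑ G : SimpleGraph (Fin n), graphWeight n q G * Xc n G) ^ 2 := by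
  classical
  set S0 := ∑ G : SimpleGraph (Fin n), pind (Xc n G = 0) * graphWeight n q G with hS0
  set S1 := ∑ G : SimpleGraph (Fin n), graphWeight n q G * Xc n G with hS1
  set S2 := ∑ G : SimpleGraph (Fin n), graphWeight n q G * (Xc n G) ^ 2 with hS2
  have hw : ∀ G : SimpleGraph (Fin n), 0 ≤ graphWeight n q G := weight_nonneg hq0 hq1
  have hCS := Finset.sum_mul_sq_le_sq_mul_sq Finset.univ
    (fun G : SimpleGraph (Fin n) => Real.sqrt (graphWeight n q G) * pind (¬ (Xc n G = 0)))
    (fun G : SimpleGraph (Fin n) => Real.sqrt (graphWeight n q G) * Xc n G)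
  have hfg : ∀ G : SimpleGraph (Fin n),
      (Real.sqrt (graphWeight n q G) * pind (¬ (Xc n G = 0)))
        * (Real.sqrt (graphWeight n q G) * Xc n G) = graphWeight n q G * Xc n G := by
    intro G
    by_cases hX : Xc n G = 0
    · rw [hX]; ring
    · rw [pind_true hX]
      rw [mul_one, ← mul_assoc, Real.mul_self_sqrt (hw G)]
  have hf2 : ∀ G : SimpleGraph (Fin n),
      (Real.sqrt (graphWeight n q G) * pind (¬ (Xc n G = 0))) ^ 2
        = graphWeight n q G * (1 - pind (Xc n G = 0)) := by
    intro G
    rw [mul_pow, pind_sq, Real.sq_sqrt (hw G), pind_not]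
  have hg2 : ∀ G : SimpleGraph (Fin n),
      (Real.sqrt (graphWeight n q G) * Xc n G) ^ 2
        = graphWeight n q G * (Xc n G) ^ 2 := by
    intro G
    rw [mul_pow, Real.sq_sqrt (hw G)]
  rw [Finset.sum_congr rfl fun G _ => hfg G] at hCS
  rw [Finset.sum_congr rfl fun G _ => hf2 G] at hCS
  rw [Finset.sum_congr rfl fun G _ => hg2 G] at hCS
  have hmass : ∑ G : SimpleGraph (Fin n), graphWeight n q G * (1 - pind (Xc n G = 0))
      = 1 - S0 := by
    have : ∀ G : SimpleGraph (Fin n), graphWeight n q G * (1 - pind (Xc n G = 0))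
        = graphWeight n q G - pind (Xc n G = 0) * graphWeight n q G := fun G => by ring
    rw [Finset.sum_congr rfl fun G _ => this G, Finset.sum_sub_distrib, total_mass, hS0]
  rw [hmass] at hCS
  -- hCS : S1 ^ 2 ≤ (1 - S0) * S2
  have hS0nn : 0 ≤ S0 :=
    Finset.sum_nonneg fun G _ => mul_nonneg (pind_nonneg _) (hw G)
  have hS2nn : 0 ≤ S2 :=
    Finset.sum_nonneg fun G _ => mul_nonneg (hw G) (sq_nonneg _)
  have hS1S2 : S1 ^ 2 ≤ S2 := by nlinarith
  nlinarith

end csstep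

lemma V4_card (n : ℕ) : (V4 n).card = n.descFactorial 4 := card_inj_eq

lemma main_bound (n : ℕ) (q : ℝ) (hq0 : 0 < q) (hq1 : q < 1) (hn : 6 ≤ n) :
    erProb n q {G | FourChordal G}
      ≤ 65536 * (1 / ((n:ℝ) ^ 2 * q ^ 2 * (1 - q))
          + 1 / ((n:ℝ) ^ 2 * q ^ 2 * (1 - q)) ^ 2) := by
  classical
  have hq0' : (0:ℝ) ≤ q := le_of_lt hq0
  have hq1' : q ≤ 1 := le_of_lt hq1
  have hp0 : (0:ℝ) < 1 - q := by linarith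
  have hn0 : (0:ℝ) < (n:ℝ) := by
    have : (6:ℝ) ≤ (n:ℝ) := by exact_mod_cast hn
    linarith
  set p : ℝ := 1 - q with hpdef
  set N4 : ℝ := ((V4 n).card : ℝ) with hN4def
  set c : ℝ := q ^ 4 * p ^ 2 with hcdef
  set S0 := ∑ G : SimpleGraph (Fin n), pind (Xc n G = 0) * graphWeight n q G with hS0
  set S1 := ∑ G : SimpleGraph (Fin n), graphWeight n q G * Xc n G with hS1
  set S2 := ∑ G : SimpleGraph (Fin n), graphWeight n q G * (Xc n G) ^ 2 with hS2
  -- identify erProb with S0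
  have herP : erProb n q {G | FourChordal G} = S0 := by
    rw [erProb, hS0]
    refine Finset.sum_congr rfl fun G _ => ?_
    rw [Set.indicator_apply]
    by_cases hF : G ∈ {G : SimpleGraph (Fin n) | FourChordal G}
    · rw [if_pos hF, pind_true ((fourChordal_iff_X G).mp hF), one_mul]
    · rw [if_neg hF, pind_false fun hX => hF ((fourChordal_iff_X G).mpr hX), zero_mul]
  -- moments
  have hfm : S1 = N4 * c := first_moment
  have hvar : S0 * S1 ^ 2 ≤ S2 - S1 ^ 2 := cs_step hq0' hq1'
  have hsm : S2 - S1 ^ 2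
      ≤ N4 * (192 * (n : ℝ) ^ 2 * (q ^ 6 * p ^ 3) + 256 * (q ^ 4 * p ^ 2)) := by
    rw [hfm, hcdef]
    exact second_moment_bound hq0' hq1'
  -- bounds on N4
  have hN4up : N4 ≤ (n:ℝ) ^ 4 := by
    rw [hN4def]
    calc ((V4 n).card : ℝ) ≤ ((n ^ 4 : ℕ) : ℝ) := by exact_mod_cast card_fun_le
      _ = (n:ℝ) ^ 4 := by push_cast; ring
  have hN4lo : ((n:ℝ) / 2) ^ 4 ≤ N4 := by
    have h1 : (n - 3) ^ 4 ≤ n.descFactorial 4 := descFactorial_ge (by omega)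
    have h2 : ((n:ℝ) / 2) ≤ ((n - 3 : ℕ) : ℝ) := by
      rw [Nat.cast_sub (by omega : 3 ≤ n)]
      push_cast
      have : (6:ℝ) ≤ (n:ℝ) := by exact_mod_cast hn
      linarith
    calc ((n:ℝ) / 2) ^ 4 ≤ (((n - 3 : ℕ) : ℝ)) ^ 4 :=
          pow_le_pow_left₀ (by positivity) h2 4
      _ = (((n - 3) ^ 4 : ℕ) : ℝ) := by push_cast; ring
      _ ≤ ((n.descFactorial 4 : ℕ) : ℝ) := by exact_mod_cast h1
      _ = N4 := by rw [hN4def, V4_card]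
  have hcpos : 0 < c := by rw [hcdef]; positivity
  have hN4pos : 0 < N4 := lt_of_lt_of_le (by positivity) hN4lo
  have hS1pos : 0 < S1 := by rw [hfm]; exact mul_pos hN4pos hcpos
  -- S0 ≤ (S2 - S1^2) / S1^2 ≤ VB' / D
  have hS0le : S0 ≤ (N4 * (192 * (n : ℝ) ^ 2 * (q ^ 6 * p ^ 3) + 256 * (q ^ 4 * p ^ 2)))
      / S1 ^ 2 := by
    rw [le_div_iff₀ (pow_pos hS1pos 2)]
    exact le_trans hvar hsm
  set VB : ℝ := (n:ℝ) ^ 4 * (192 * (n : ℝ) ^ 2 * (q ^ 6 * p ^ 3) + 256 * (q ^ 4 * p ^ 2))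
    with hVB
  have hVBge : N4 * (192 * (n : ℝ) ^ 2 * (q ^ 6 * p ^ 3) + 256 * (q ^ 4 * p ^ 2)) ≤ VB := by
    rw [hVB]
    exact mul_le_mul_of_nonneg_right hN4up (by positivity)
  set D : ℝ := ((n:ℝ) / 2) ^ 8 * (q ^ 8 * p ^ 4) with hD
  have hDpos : 0 < D := by rw [hD]; positivity
  have hDle : D ≤ S1 ^ 2 := by
    rw [hfm, hcdef, hD]
    have h1 : ((n:ℝ) / 2) ^ 8 ≤ N4 ^ 2 := by
      calc ((n:ℝ) / 2) ^ 8 = (((n:ℝ) / 2) ^ 4) ^ 2 := by ring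
        _ ≤ N4 ^ 2 := pow_le_pow_left₀ (by positivity) hN4lo 2
    calc ((n:ℝ) / 2) ^ 8 * (q ^ 8 * p ^ 4) ≤ N4 ^ 2 * (q ^ 8 * p ^ 4) :=
          mul_le_mul_of_nonneg_right h1 (by positivity)
      _ = (N4 * (q ^ 4 * p ^ 2)) ^ 2 := by ring
  have hchain : S0 ≤ VB / D := by
    calc S0 ≤ (N4 * (192 * (n : ℝ) ^ 2 * (q ^ 6 * p ^ 3) + 256 * (q ^ 4 * p ^ 2)))
        / S1 ^ 2 := hS0le
      _ ≤ VB / S1 ^ 2 := (div_le_div_iff_of_pos_right (pow_pos hS1pos 2)).mpr hVBge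
      _ ≤ VB / D := by
          have hVBpos : 0 < VB := by rw [hVB]; positivity
          exact div_le_div_of_nonneg_left hVBpos.le hDpos hDle
  -- final algebra
  set x : ℝ := (n:ℝ) ^ 2 * q ^ 2 * (1 - q) with hx
  have hxpos : 0 < x := by rw [hx]; positivity
  have hfinal : VB / D ≤ 65536 * (1 / x + 1 / x ^ 2) := by
    rw [div_le_iff₀ hDpos]
    have e1 : 65536 * (1 / x + 1 / x ^ 2) * D
        = 256 * ((n:ℝ) ^ 6 * q ^ 6 * p ^ 3) + 256 * ((n:ℝ) ^ 4 * q ^ 4 * p ^ 2) := by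
      rw [hx, hD, hpdef]
      field_simp
      ring
    rw [e1, hVB]
    have hnn : (0:ℝ) ≤ (n:ℝ) ^ 6 * q ^ 6 * p ^ 3 := by positivity
    nlinarith
  rw [herP]
  exact le_trans hchain hfinal

lemma erProb_nonneg {n : ℕ} {q : ℝ} (hq0 : 0 ≤ q) (hq1 : q ≤ 1)
    (A : Set (SimpleGraph (Fin n))) : 0 ≤ erProb n q A :=
  Finset.sum_nonneg fun G _ =>
    Set.indicator_apply_nonneg fun _ => weight_nonneg hq0 hq1 G

/-- If `(n(1-p))⁴ p² → ∞`, then with high probability `G(n,1-p)` is not 4-chordal,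
i.e. it contains an induced (chordless) 4-cycle. -/
theorem not_fourChordal_whp (p : ℕ → ℝ) (hp : ∀ n, p n ∈ Set.Icc (0 : ℝ) 1)
    (h : Tendsto (fun n : ℕ => ((n : ℝ) * (1 - p n)) ^ 4 * p n ^ 2) atTop atTop) :
    Tendsto (fun n : ℕ => erProb n (1 - p n) {G | FourChordal G}) atTop (nhds 0) := by
  classical
  set x : ℕ → ℝ := fun k => (k:ℝ) ^ 2 * (1 - p k) ^ 2 * p k with hxdef
  have hp0 : ∀ k, 0 ≤ p k := fun k => (hp k).1
  have hp1 : ∀ k, p k ≤ 1 := fun k => (hp k).2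
  have hxnn : ∀ k, 0 ≤ x k := by
    intro k
    have h1 := hp0 k
    have h2 : (0:ℝ) ≤ 1 - p k := by linarith [hp1 k]
    rw [hxdef]
    positivity
  have hx2 : (fun k : ℕ => ((k:ℝ) * (1 - p k)) ^ 4 * p k ^ 2) = fun k => (x k) ^ 2 := by
    funext k
    rw [hxdef]
    ring
  have hsq : Tendsto (fun k => (x k) ^ 2) atTop atTop := by
    rw [← hx2]
    exact h
  have hxt : Tendsto x atTop atTop := by
    rw [tendsto_atTop]
    intro b
    filter_upwards [hsq.eventually_ge_atTop ((max b 1) ^ 2)] with k hk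
    have h0 : (0:ℝ) ≤ max b 1 := le_trans zero_le_one (le_max_right b 1)
    have h1 : max b 1 ≤ x k := by nlinarith [hxnn k]
    exact le_trans (le_max_left b 1) h1
  have hb0 : Tendsto (fun k => (65536:ℝ) * (1 / x k + 1 / (x k) ^ 2)) atTop (nhds 0) := by
    have h1 : Tendsto (fun k => 1 / x k) atTop (nhds 0) := by
      simpa [one_div, Pi.inv_def] using hxt.inv_tendsto_atTop
    have h2 : Tendsto (fun k => 1 / (x k) ^ 2) atTop (nhds 0) := by
      simpa [one_div, Pi.inv_def] using hsq.inv_tendsto_atTop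
    have h3 := (h1.add h2).const_mul (65536:ℝ)
    simpa using h3
  refine tendsto_of_tendsto_of_tendsto_of_le_of_le' tendsto_const_nhds hb0 ?_ ?_
  · filter_upwards with k
    exact erProb_nonneg (by linarith [hp1 k]) (by linarith [hp0 k]) _
  · filter_upwards [eventually_ge_atTop 6, hxt.eventually_ge_atTop 1] with k hk6 hk1
    have hq0 : 0 < 1 - p k := by
      rcases lt_or_ge 0 (1 - p k) with h' | h'
      · exact h'
      · exfalso
        have he : 1 - p k = 0 := le_antisymm h' (by linarith [hp1 k])
        have : x k = 0 := by simp only [hxdef]; rw [he]; ring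
        linarith
    have hq1 : 1 - p k < 1 := by
      rcases lt_or_ge 0 (p k) with h' | h'
      · linarith
      · exfalso
        have he : p k = 0 := le_antisymm h' (hp0 k)
        have : x k = 0 := by simp only [hxdef]; rw [he]; ring
        linarith
    have hmb := main_bound k (1 - p k) hq0 hq1 hk6
    calc erProb k (1 - p k) {G | FourChordal G}
        ≤ 65536 * (1 / ((k:ℝ) ^ 2 * (1 - p k) ^ 2 * (1 - (1 - p k)))
            + 1 / ((k:ℝ) ^ 2 * (1 - p k) ^ 2 * (1 - (1 - p k))) ^ 2) := hmb
      _ = 65536 * (1 / x k + 1 / (x k) ^ 2) := by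
          simp only [hxdef]
          ring_nf
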